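/- For all real x and all integers n ≥ 1, B_n(x) − (18x² − 1)·B_{n−1}(x) = C_{2(n−1)}(x) − (36x² − 6x − 2)·∑_{k=1}^{n−1} B_k(x)·C_{2(n−k−1)}(x). -/
import Mathlib


def B (x : ℝ) : ℕ → ℝ
  | 0 => 0
  | 1 => 1
  | n + 2 => 6 * x * B x (n + 1) - B x n

def C (x : ℝ) : ℕ → ℝ
  | 0 => 1
  | 1 => 3 * x
  | n + 2 => 6 * x * C x (n + 1) - C x n

lemma Cstep2 (x : ℝ) (n : ℕ) : C x (n + 4) = (36 * x ^ 2 - 2) * C x (n + 2) - C x n := by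
  show C x (n + 2 + 2) = _
  rw [show C x (n + 2 + 2) = 6 * x * C x (n + 2 + 1) - C x (n + 2) from rfl,
      show C x (n + 2 + 1) = 6 * x * C x (n + 2) - C x (n + 1) from rfl,
      show C x (n + 2) = 6 * x * C x (n + 1) - C x n from rfl]
  ring

lemma Ceven (x : ℝ) (j : ℕ) :
    C x (2 * (j + 2)) = (36 * x ^ 2 - 2) * C x (2 * (j + 1)) - C x (2 * j) := by
  rw [show 2 * (j + 2) = 2 * j + 4 by ring, show 2 * (j + 1) = 2 * j + 2 by ring]
  exact Cstep2 x (2 * j)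

lemma key (x : ℝ) : ∀ m : ℕ,
    B x (m + 1) - (18 * x ^ 2 - 1) * B x m =
      C x (2 * m) - (36 * x ^ 2 - 6 * x - 2) *
        ∑ k ∈ Finset.Icc 1 m, B x k * C x (2 * (m - k)) := by
  intro m
  induction m using Nat.twoStepInduction with
  | zero => simp [B, C]
  | one => simp [B, C]; ring
  | more m h1 h2 =>
    have hB : B x (m + 3) = 6 * x * B x (m + 2) - B x (m + 1) := rfl
    have hC : C x (2 * (m + 2)) = (36 * x ^ 2 - 2) * C x (2 * (m + 1)) - C x (2 * m) :=
      Ceven x m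
    have hS : ∑ k ∈ Finset.Icc 1 (m + 2), B x k * C x (2 * (m + 2 - k)) =
        (36 * x ^ 2 - 2) * ∑ k ∈ Finset.Icc 1 (m + 1), B x k * C x (2 * (m + 1 - k)) -
        ∑ k ∈ Finset.Icc 1 m, B x k * C x (2 * (m - k)) +
        (B x (m + 2) - (18 * x ^ 2 - 1) * B x (m + 1)) := by
      rw [Finset.sum_Icc_succ_top (by omega : 1 ≤ m + 2),
          Finset.sum_Icc_succ_top (by omega : 1 ≤ m + 1),
          Finset.sum_Icc_succ_top (by omega : 1 ≤ m + 1)]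
      have e1 : ∑ k ∈ Finset.Icc 1 m, B x k * C x (2 * (m + 2 - k)) =
          ∑ k ∈ Finset.Icc 1 m,
            ((36 * x ^ 2 - 2) * (B x k * C x (2 * (m + 1 - k))) - B x k * C x (2 * (m - k))) := by
        refine Finset.sum_congr rfl fun k hk => ?_
        have hkm : k ≤ m := (Finset.mem_Icc.mp hk).2
        rw [show m + 2 - k = (m - k) + 2 by omega, show m + 1 - k = (m - k) + 1 by omega,
            Ceven]
        ring
      rw [e1, Finset.sum_sub_distrib]
      rw [show m + 2 - (m + 1) = 1 by omega, show m + 2 - (m + 1 + 1) = 0 by omega,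
        show m + 1 - (m + 1) = 0 by omega]
      rw [show C x (2 * 1) = 6 * x * (3 * x) - 1 from rfl,
        show C x (2 * 0) = 1 from rfl, ← Finset.mul_sum]
      ring
    have hB2 : B x (m + 2) = 6 * x * B x (m + 1) - B x m := rfl
    rw [hB, hC, hS]
    linear_combination (36 * x ^ 2 - 2) * h2 - h1 + (1 - 18 * x ^ 2) * hB2

theorem stmt6 (x : ℝ) (n : ℕ) (hn : 1 ≤ n) :
    B x n - (18 * x ^ 2 - 1) * B x (n - 1) =
      C x (2 * (n - 1)) - (36 * x ^ 2 - 6 * x - 2) *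
        ∑ k ∈ Finset.Icc 1 (n - 1), B x k * C x (2 * (n - k - 1)) := by
  obtain ⟨m, rfl⟩ : ∃ m, n = m + 1 := ⟨n - 1, by omega⟩
  simp only [Nat.add_sub_cancel]
  have : ∑ k ∈ Finset.Icc 1 m, B x k * C x (2 * (m + 1 - k - 1)) =
      ∑ k ∈ Finset.Icc 1 m, B x k * C x (2 * (m - k)) := by
    refine Finset.sum_congr rfl fun k hk => ?_
    rw [show m + 1 - k - 1 = m - k by omega]
  rw [this]
  exact key x m
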